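/- For the A = 0 solution a(t) = ε(1 − 5ε²t)^{-3/10}, b(t) = (1 − 5ε²t)^{1/10}, the full torsion tensor norm satisfies |T_t|² = (15/4) a_t² b_t^{-4} = (15/4) ε² (1 − 5ε²t)^{-1}, which blows up as t → 1/(5ε²). -/

import Mathlib

lemma stmt10_key (ε : ℝ) (u : ℝ) (hu : 0 < u) :
    (15/4) * (ε * u ^ (-(3:ℝ)/10))^2 * (u ^ ((1:ℝ)/10)) ^ (-(4:ℝ))
      = (15/4) * ε^2 * u ^ (-(1:ℝ)) := by
  have e1 : (u ^ (-(3:ℝ)/10))^2 = u ^ (-(3:ℝ)/5) := by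
    rw [← Real.rpow_natCast (u ^ (-(3:ℝ)/10)) 2, ← Real.rpow_mul hu.le]
    norm_num
  have e2 : (u ^ ((1:ℝ)/10)) ^ (-(4:ℝ)) = u ^ (-(2:ℝ)/5) := by
    rw [← Real.rpow_mul hu.le]
    norm_num
  have e3 : u ^ (-(3:ℝ)/5) * u ^ (-(2:ℝ)/5) = u ^ (-(1:ℝ)) := by
    rw [← Real.rpow_add hu]
    norm_num
  rw [mul_pow, e1, e2]
  calc (15/4) * (ε^2 * u ^ (-(3:ℝ)/5)) * u ^ (-(2:ℝ)/5)
      = (15/4) * ε^2 * (u ^ (-(3:ℝ)/5) * u ^ (-(2:ℝ)/5)) := by ring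
    _ = (15/4) * ε^2 * u ^ (-(1:ℝ)) := by rw [e3]

/-- For the A = 0 solution, the torsion norm `|T_t|² = (15/4) a² b^(-4)
= (15/4) ε² (1-5ε²t)^(-1)`, which blows up as `t → 1/(5ε²)`. -/
theorem stmt10 (ε : ℝ) (hε : 0 < ε)
    (a b : ℝ → ℝ)
    (ha : ∀ t, a t = ε * (1 - 5*ε^2*t) ^ (-(3:ℝ)/10))
    (hb : ∀ t, b t = (1 - 5*ε^2*t) ^ ((1:ℝ)/10)) :
    (∀ t ∈ Set.Ico (0:ℝ) (1/(5*ε^2)),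
      (15/4) * (a t)^2 * (b t) ^ (-(4:ℝ)) = (15/4) * ε^2 * (1 - 5*ε^2*t) ^ (-(1:ℝ))) ∧
    Filter.Tendsto (fun t => (15/4) * (a t)^2 * (b t) ^ (-(4:ℝ)))
      (nhdsWithin (1/(5*ε^2)) (Set.Iio (1/(5*ε^2)))) Filter.atTop := by
  have hε2 : (0:ℝ) < 5 * ε^2 := by positivity
  have hpos : ∀ t, t < 1/(5*ε^2) → 0 < 1 - 5*ε^2*t := by
    intro t ht
    have : 5*ε^2*t < 1 := by
      have := (lt_div_iff₀ hε2).mp ht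
      linarith [this]
    linarith
  have key : ∀ t, t < 1/(5*ε^2) →
      (15/4) * (a t)^2 * (b t) ^ (-(4:ℝ)) = (15/4) * ε^2 * (1 - 5*ε^2*t) ^ (-(1:ℝ)) := by
    intro t ht
    rw [ha, hb]
    exact stmt10_key ε _ (hpos t ht)
  constructor
  · intro t ht
    exact key t ht.2
  · have heq : (fun t => (15/4) * ε^2 * (1 - 5*ε^2*t) ^ (-(1:ℝ)))
        =ᶠ[nhdsWithin (1/(5*ε^2)) (Set.Iio (1/(5*ε^2)))]
        (fun t => (15/4) * (a t)^2 * (b t) ^ (-(4:ℝ))) := by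
      filter_upwards [self_mem_nhdsWithin] with t ht
      exact (key t ht).symm
    refine Filter.Tendsto.congr' heq ?_
    have hinner : Filter.Tendsto (fun t => 1 - 5*ε^2*t)
        (nhdsWithin (1/(5*ε^2)) (Set.Iio (1/(5*ε^2)))) (nhdsWithin 0 (Set.Ioi 0)) := by
      apply tendsto_nhdsWithin_of_tendsto_nhds_of_eventually_within
      · have hc : Continuous fun t : ℝ => 1 - 5*ε^2*t := by continuity
        have h0 : 1 - 5*ε^2*(1/(5*ε^2)) = 0 := by field_simp; ring
        have := (hc.tendsto (1/(5*ε^2))).mono_left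
          (nhdsWithin_le_nhds (s := Set.Iio (1/(5*ε^2))))
        rw [h0] at this
        exact this
      · filter_upwards [self_mem_nhdsWithin] with t ht using hpos t ht
    have hmain := tendsto_inv_nhdsGT_zero.comp hinner
    have hconst : (0:ℝ) < (15/4) * ε^2 := by positivity
    have := hmain.const_mul_atTop hconst
    refine this.congr (fun t => ?_)
    simp [Real.rpow_neg_one, Function.comp]
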